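/- In the abstract discrete Biot setting with error sequences, there is a constant C > 0 depending only on γ_a, C_a and β_S (independent of κ, c₀, τ and N) such that for every 1 ≤ m ≤ N: (τ/κ)^{1/2}·‖e_z^m‖_{W0} ≤ C·( (τ/κ)^{1/2}·‖e_z^0‖_{W0} + τ^{1/2}·Σ_{j=1}^{N} κ^{−1/2}·‖ρ_z^j − ρ_z^{j−1}‖_{W0} + Σ_{j=1}^{N} τ·‖R^j‖_Q ). -/

import Mathlib

open scoped RealInnerProductSpace
open Finset

lemma infsup_aux {U Q : Type*}
    [NormedAddCommGroup U] [InnerProductSpace ℝ U]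
    [NormedAddCommGroup Q] [InnerProductSpace ℝ Q]
    (βS M : ℝ) (hM : 0 ≤ M) (DU : U →ₗ[ℝ] Q) (q : Q)
    (hinf : βS * ‖q‖ ≤ ⨆ v : {v : U // v ≠ 0}, ⟪DU (v : U), q⟫ / ‖(v : U)‖)
    (hb : ∀ v : U, v ≠ 0 → ⟪DU v, q⟫ / ‖v‖ ≤ M) :
    βS * ‖q‖ ≤ M := by
  rcases isEmpty_or_nonempty {v : U // v ≠ 0} with h | h
  · rw [Real.iSup_of_isEmpty] at hinf; linarith
  · exact hinf.trans (ciSup_le fun v => hb v v.2)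

lemma sum_sq_le_sq_sum (s : Finset ℕ) (f : ℕ → ℝ) (hf : ∀ j ∈ s, 0 ≤ f j) :
    ∑ j ∈ s, (f j) ^ 2 ≤ (∑ j ∈ s, f j) ^ 2 := by
  calc ∑ j ∈ s, (f j) ^ 2 = ∑ j ∈ s, f j * f j := by simp [sq]
    _ ≤ ∑ j ∈ s, f j * (∑ i ∈ s, f i) := by
        refine Finset.sum_le_sum fun j hj => ?_
        exact mul_le_mul_of_nonneg_left (Finset.single_le_sum hf hj) (hf j hj)
    _ = (∑ j ∈ s, f j) ^ 2 := by rw [← Finset.sum_mul]; ring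


lemma young_aux (γa Ca βS τ x r : ℝ) (hγa : 0 < γa) (hβS : 0 < βS) (hτ : 0 < τ) :
    Ca / βS * r * x ≤ τ⁻¹ * (γa * x ^ 2) + Ca ^ 2 / (4 * γa * βS ^ 2) * τ * r ^ 2 := by
  have key : τ⁻¹ * (γa * x ^ 2) + Ca ^ 2 / (4 * γa * βS ^ 2) * τ * r ^ 2
      - Ca / βS * r * x = γa / τ * (x - τ * (Ca / βS) * r / (2 * γa)) ^ 2 := by
    field_simp
    ring
  nlinarith [mul_nonneg (div_pos hγa hτ).le (sq_nonneg (x - τ * (Ca / βS) * r / (2 * γa)))]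

lemma quad_aux (K X A B D : ℝ) (hK : 0 < K) (hX : 0 ≤ X) (hA : 0 ≤ A) (hB : 0 ≤ B)
    (hD : 0 ≤ D) (h : X ^ 2 ≤ A ^ 2 + 2 * X * B + 2 * K * D ^ 2) :
    X ≤ 2 * A + 2 * B + 2 * Real.sqrt K * D := by
  have hs0 : 0 ≤ Real.sqrt K := Real.sqrt_nonneg K
  have hs2 : Real.sqrt K ^ 2 = K := Real.sq_sqrt hK.le
  have h1 : X ^ 2 ≤ (2 * A + 2 * B + 2 * Real.sqrt K * D) ^ 2 := by
    nlinarith [sq_nonneg (X - 2 * B), mul_nonneg hA hB,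
      mul_nonneg hA (mul_nonneg hs0 hD), mul_nonneg hB (mul_nonneg hs0 hD),
      sq_nonneg A, sq_nonneg (Real.sqrt K * D)]
  calc X = Real.sqrt (X ^ 2) := (Real.sqrt_sq hX).symm
    _ ≤ Real.sqrt ((2 * A + 2 * B + 2 * Real.sqrt K * D) ^ 2) := Real.sqrt_le_sqrt h1
    _ = 2 * A + 2 * B + 2 * Real.sqrt K * D := Real.sqrt_sq (by positivity)


set_option maxHeartbeats 1000000 in
/-- Flux error estimate in the weighted `L²` part of the flux norm for minimally
Stokes–Biot stable Euler–Galerkin schemes: there is `C > 0` depending only on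
`γ_a, C_a, β_S` (independent of `κ, c₀, τ, N`) such that for `1 ≤ m ≤ N`,
`(τ/κ)^{1/2}‖e_z^m‖ ≤ C((τ/κ)^{1/2}‖e_z^0‖ + τ^{1/2}Σ_j κ^{−1/2}‖ρ_z^j − ρ_z^{j−1}‖ +
Σ_j τ‖R^j‖)`. -/
theorem biot_flux_error_estimate {U W Q : Type*}
    [NormedAddCommGroup U] [InnerProductSpace ℝ U] [FiniteDimensional ℝ U]
    [NormedAddCommGroup W] [InnerProductSpace ℝ W] [FiniteDimensional ℝ W]
    [NormedAddCommGroup Q] [InnerProductSpace ℝ Q] [FiniteDimensional ℝ Q]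
    (γa Ca βS : ℝ) (hγa : 0 < γa) (hCa : 0 < Ca) (hβS : 0 < βS) :
    ∃ C : ℝ, 0 < C ∧
      ∀ (τ κ c₀ Cb : ℝ), 0 < τ → 0 < κ → κ ≤ 1 → 0 ≤ c₀ → c₀ < 1 → 0 < Cb →
      ∀ (a : U →ₗ[ℝ] U →ₗ[ℝ] ℝ) (DU : U →ₗ[ℝ] Q) (DW : W →ₗ[ℝ] Q),
        (∀ u v : U, a u v = a v u) →
        (∀ u : U, γa * ‖u‖ ^ 2 ≤ a u u) →
        (∀ u v : U, |a u v| ≤ Ca * ‖u‖ * ‖v‖) →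
        (∀ v : U, ‖DU v‖ ≤ Cb * ‖v‖) →
        (∀ q : Q, βS * ‖q‖ ≤ ⨆ v : {v : U // v ≠ 0}, ⟪DU (v : U), q⟫ / ‖(v : U)‖) →
      ∀ (N : ℕ), 1 ≤ N →
      ∀ (eu : ℕ → U) (ez : ℕ → W) (ep : ℕ → Q) (ρz : ℕ → W) (R : ℕ → Q),
        (∀ m ≤ N, ∀ v : U, a (eu m) v + ⟪DU v, ep m⟫ = 0) →
        (∀ m ≤ N, ∀ w : W, κ⁻¹ * ⟪ez m, w⟫ + ⟪DW w, ep m⟫ = κ⁻¹ * ⟪ρz m, w⟫) →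
        (∀ m, 1 ≤ m → m ≤ N → ∀ q : Q,
          ⟪DU (τ⁻¹ • (eu m - eu (m - 1))), q⟫ + ⟪DW (ez m), q⟫
            - c₀ * ⟪τ⁻¹ • (ep m - ep (m - 1)), q⟫ = ⟪R m, q⟫) →
      ∀ m, 1 ≤ m → m ≤ N →
        Real.sqrt (τ / κ) * ‖ez m‖ ≤
          C * (Real.sqrt (τ / κ) * ‖ez 0‖
            + Real.sqrt τ * ∑ j ∈ Icc 1 N, (Real.sqrt κ)⁻¹ * ‖ρz j - ρz (j - 1)‖
            + ∑ j ∈ Icc 1 N, τ * ‖R j‖) := by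
  classical
  set K : ℝ := Ca ^ 2 / (4 * γa * βS ^ 2) with hKdef
  have hKpos : 0 < K := by positivity
  have hs0 : 0 ≤ Real.sqrt K := Real.sqrt_nonneg K
  have hs2 : Real.sqrt K ^ 2 = K := Real.sq_sqrt hKpos.le
  refine ⟨2 + 2 * Real.sqrt K, by positivity, ?_⟩
  intro τ κ c₀ Cb hτ hκ hκ1 hc₀ hc₀1 hCb a DU DW hsym hcoer habs hDU hinf
    N hN eu ez ep ρz R heq1 heq2 heq3 m hm1 hmN
  -- per-step energy inequality
  have hstep : ∀ j, 1 ≤ j → j ≤ N →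
      ‖ez j‖ ^ 2 ≤ ‖ez (j - 1)‖ ^ 2 + 2 * ‖ρz j - ρz (j - 1)‖ * ‖ez j‖
        + 2 * κ * (K * τ * ‖R j‖ ^ 2) := by
    intro j hj1 hjN
    have hj0 : j - 1 ≤ N := le_trans (Nat.sub_le j 1) hjN
    -- elasticity difference equation
    have e1' : ∀ v : U, a (eu j - eu (j - 1)) v + ⟪DU v, ep j - ep (j - 1)⟫ = 0 := by
      intro v
      have ha := heq1 j hjN v; have hb := heq1 (j - 1) hj0 v
      simp only [map_sub, LinearMap.sub_apply, inner_sub_right] at *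
      linarith
    have e1 := e1' (eu j - eu (j - 1))
    -- Darcy difference tested with ez j
    have e2 : κ⁻¹ * ⟪ez j, ez j⟫ - κ⁻¹ * ⟪ez (j - 1), ez j⟫ + ⟪DW (ez j), ep j - ep (j - 1)⟫
        = κ⁻¹ * ⟪ρz j, ez j⟫ - κ⁻¹ * ⟪ρz (j - 1), ez j⟫ := by
      have ha := heq2 j hjN (ez j); have hb := heq2 (j - 1) hj0 (ez j)
      simp only [inner_sub_right]
      linarith
    have e3 := heq3 j hj1 hjN (ep j - ep (j - 1))
    rw [map_smul, inner_smul_left, inner_smul_left] at e3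
    simp only [RCLike.star_def, starRingEnd_apply, star_trivial] at e3
    have ident : κ⁻¹ * ⟪ez j, ez j⟫ + τ⁻¹ * (a (eu j - eu (j - 1)) (eu j - eu (j - 1)))
        + c₀ * τ⁻¹ * ⟪ep j - ep (j - 1), ep j - ep (j - 1)⟫
        = κ⁻¹ * ⟪ez (j - 1), ez j⟫ + κ⁻¹ * ⟪ρz j - ρz (j - 1), ez j⟫
          - ⟪R j, ep j - ep (j - 1)⟫ := by
      simp only [inner_sub_left, inner_sub_right] at e1 e2 e3 ⊢
      linear_combination e2 - e3 + τ⁻¹ * e1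
    -- pressure difference bound via inf-sup
    have hdpb : βS * ‖ep j - ep (j - 1)‖ ≤ Ca * ‖eu j - eu (j - 1)‖ := by
      refine infsup_aux βS _ (by positivity) DU _ (hinf _) ?_
      intro v hv
      have hv0 : (0 : ℝ) < ‖v‖ := norm_pos_iff.mpr hv
      rw [div_le_iff₀ hv0]
      have hev := e1' v
      calc ⟪DU v, ep j - ep (j - 1)⟫ = -(a (eu j - eu (j - 1)) v) := by linarith
        _ ≤ |a (eu j - eu (j - 1)) v| := neg_le_abs _
        _ ≤ Ca * ‖eu j - eu (j - 1)‖ * ‖v‖ := habs _ _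
    have hdp' : ‖ep j - ep (j - 1)‖ ≤ Ca / βS * ‖eu j - eu (j - 1)‖ := by
      rw [div_mul_eq_mul_div, le_div_iff₀ hβS]; linarith
    -- assorted bounds
    have hzz : ⟪ez j, ez j⟫ = ‖ez j‖ ^ 2 := real_inner_self_eq_norm_sq _
    have hb1 : ⟪ez (j - 1), ez j⟫ ≤ ‖ez (j - 1)‖ * ‖ez j‖ := real_inner_le_norm _ _
    have hb2 : ⟪ρz j - ρz (j - 1), ez j⟫ ≤ ‖ρz j - ρz (j - 1)‖ * ‖ez j‖ :=
      real_inner_le_norm _ _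
    have hb3 : -⟪R j, ep j - ep (j - 1)⟫ ≤ ‖R j‖ * ‖ep j - ep (j - 1)‖ := by
      have h := real_inner_le_norm (R j) (-(ep j - ep (j - 1)))
      rwa [inner_neg_right, norm_neg] at h
    have hb4 : γa * ‖eu j - eu (j - 1)‖ ^ 2 ≤ a (eu j - eu (j - 1)) (eu j - eu (j - 1)) :=
      hcoer _
    have hpp : (0 : ℝ) ≤ ⟪ep j - ep (j - 1), ep j - ep (j - 1)⟫ := real_inner_self_nonneg
    have hb5 : -⟪R j, ep j - ep (j - 1)⟫ ≤ Ca / βS * ‖R j‖ * ‖eu j - eu (j - 1)‖ := by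
      calc -⟪R j, ep j - ep (j - 1)⟫ ≤ ‖R j‖ * ‖ep j - ep (j - 1)‖ := hb3
        _ ≤ ‖R j‖ * (Ca / βS * ‖eu j - eu (j - 1)‖) :=
            mul_le_mul_of_nonneg_left hdp' (norm_nonneg _)
        _ = Ca / βS * ‖R j‖ * ‖eu j - eu (j - 1)‖ := by ring
    -- Young's inequality
    have young : Ca / βS * ‖R j‖ * ‖eu j - eu (j - 1)‖
        ≤ τ⁻¹ * (γa * ‖eu j - eu (j - 1)‖ ^ 2) + K * τ * ‖R j‖ ^ 2 := by
      rw [hKdef]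
      exact young_aux γa Ca βS τ _ _ hγa hβS hτ
    -- combine: weighted inequality
    have hτi : (0 : ℝ) ≤ τ⁻¹ := (inv_pos.mpr hτ).le
    have hκi : (0 : ℝ) ≤ κ⁻¹ := (inv_pos.mpr hκ).le
    have step1 : κ⁻¹ * ‖ez j‖ ^ 2
        ≤ κ⁻¹ * (‖ez (j - 1)‖ * ‖ez j‖) + κ⁻¹ * (‖ρz j - ρz (j - 1)‖ * ‖ez j‖)
          + K * τ * ‖R j‖ ^ 2 := by
      have c1 := mul_le_mul_of_nonneg_left hb1 hκi
      have c2 := mul_le_mul_of_nonneg_left hb2 hκi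
      have c3 := mul_le_mul_of_nonneg_left hb4 hτi
      have c4 : (0 : ℝ) ≤ c₀ * τ⁻¹ * ⟪ep j - ep (j - 1), ep j - ep (j - 1)⟫ := by positivity
      rw [hzz] at ident
      linarith
    have step2 : ‖ez j‖ ^ 2 ≤ ‖ez (j - 1)‖ * ‖ez j‖ + ‖ρz j - ρz (j - 1)‖ * ‖ez j‖
        + κ * (K * τ * ‖R j‖ ^ 2) := by
      have hne : κ ≠ 0 := hκ.ne'
      calc ‖ez j‖ ^ 2 = κ * (κ⁻¹ * ‖ez j‖ ^ 2) := by field_simp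
        _ ≤ κ * (κ⁻¹ * (‖ez (j - 1)‖ * ‖ez j‖) + κ⁻¹ * (‖ρz j - ρz (j - 1)‖ * ‖ez j‖)
              + K * τ * ‖R j‖ ^ 2) := mul_le_mul_of_nonneg_left step1 hκ.le
        _ = ‖ez (j - 1)‖ * ‖ez j‖ + ‖ρz j - ρz (j - 1)‖ * ‖ez j‖
              + κ * (K * τ * ‖R j‖ ^ 2) := by field_simp
    linarith [sq_nonneg (‖ez j‖ - ‖ez (j - 1)‖), step2]
  -- summed inequality
  have hsum : ∀ M, M ≤ N → ‖ez M‖ ^ 2 ≤ ‖ez 0‖ ^ 2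
      + ∑ j ∈ Icc 1 M, (2 * ‖ρz j - ρz (j - 1)‖ * ‖ez j‖ + 2 * κ * (K * τ * ‖R j‖ ^ 2)) := by
    intro M
    induction M with
    | zero => intro _; simp
    | succ n ih =>
      intro hn
      have hn' : n ≤ N := le_trans (Nat.le_succ n) hn
      have h1 := ih hn'
      have h2 := hstep (n + 1) (Nat.le_add_left 1 n) hn
      simp only [Nat.add_sub_cancel] at h2
      rw [Finset.sum_Icc_succ_top (Nat.le_add_left 1 n)]
      simp only [Nat.add_sub_cancel]
      linarith
  -- maximal index
  obtain ⟨Mx, hMx_mem, hMx⟩ := Finset.exists_max_image (Finset.range (N + 1))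
    (fun j => ‖ez j‖) ⟨0, Finset.mem_range.mpr (Nat.succ_pos N)⟩
  have hMxN : Mx ≤ N := Nat.lt_succ_iff.mp (Finset.mem_range.mp hMx_mem)
  set S : ℝ := ‖ez Mx‖ with hSdef
  have hSmax : ∀ j, j ≤ N → ‖ez j‖ ≤ S := fun j hj =>
    hMx j (Finset.mem_range.mpr (Nat.lt_succ_of_le hj))
  have hS0 : (0 : ℝ) ≤ S := norm_nonneg _
  set P : ℝ := ∑ j ∈ Icc 1 N, ‖ρz j - ρz (j - 1)‖ with hPdef
  set D : ℝ := ∑ j ∈ Icc 1 N, τ * ‖R j‖ with hDdef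
  set TR : ℝ := ∑ j ∈ Icc 1 N, ‖R j‖ ^ 2 with hTRdef
  have hP0 : (0 : ℝ) ≤ P := Finset.sum_nonneg fun j _ => norm_nonneg _
  have hD0 : (0 : ℝ) ≤ D := Finset.sum_nonneg fun j _ => by positivity
  have hTR0 : (0 : ℝ) ≤ TR := Finset.sum_nonneg fun j _ => sq_nonneg _
  -- master inequality
  have master : S ^ 2 ≤ ‖ez 0‖ ^ 2 + 2 * S * P + 2 * κ * (K * τ * TR) := by
    rcases Nat.eq_zero_or_pos Mx with h0 | hpos
    · have : S = ‖ez 0‖ := by rw [hSdef, h0]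
      rw [this]
      nlinarith [mul_nonneg (norm_nonneg (ez 0)) hP0, mul_nonneg hκ.le
        (mul_nonneg (mul_nonneg hKpos.le hτ.le) hTR0)]
    · have h := hsum Mx hMxN
      have hext : ∑ j ∈ Icc 1 Mx, (2 * ‖ρz j - ρz (j - 1)‖ * ‖ez j‖
            + 2 * κ * (K * τ * ‖R j‖ ^ 2))
          ≤ ∑ j ∈ Icc 1 N, (2 * ‖ρz j - ρz (j - 1)‖ * S + 2 * κ * (K * τ * ‖R j‖ ^ 2)) := by
        calc ∑ j ∈ Icc 1 Mx, (2 * ‖ρz j - ρz (j - 1)‖ * ‖ez j‖ + 2 * κ * (K * τ * ‖R j‖ ^ 2))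
            ≤ ∑ j ∈ Icc 1 Mx, (2 * ‖ρz j - ρz (j - 1)‖ * S + 2 * κ * (K * τ * ‖R j‖ ^ 2)) := by
              refine Finset.sum_le_sum fun j hj => ?_
              have hjN : j ≤ N := le_trans (Finset.mem_Icc.mp hj).2 hMxN
              have := hSmax j hjN
              nlinarith [norm_nonneg (ρz j - ρz (j - 1))]
          _ ≤ ∑ j ∈ Icc 1 N, (2 * ‖ρz j - ρz (j - 1)‖ * S + 2 * κ * (K * τ * ‖R j‖ ^ 2)) := by
              refine Finset.sum_le_sum_of_subset_of_nonneg
                (Finset.Icc_subset_Icc_right hMxN) fun j _ _ => ?_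
              have := norm_nonneg (ρz j - ρz (j - 1))
              positivity
      have hsplit : ∑ j ∈ Icc 1 N, (2 * ‖ρz j - ρz (j - 1)‖ * S + 2 * κ * (K * τ * ‖R j‖ ^ 2))
          = 2 * S * P + 2 * κ * (K * τ * TR) := by
        rw [Finset.sum_add_distrib, hPdef, hTRdef]
        simp only [Finset.mul_sum]
        refine congrArg₂ (· + ·) ?_ ?_ <;>
          exact Finset.sum_congr rfl fun j _ => by ring
      rw [hsplit] at hext
      linarith
  -- bound τ² TR ≤ D²
  have hTRD : τ ^ 2 * TR ≤ D ^ 2 := by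
    have : τ ^ 2 * TR = ∑ j ∈ Icc 1 N, (τ * ‖R j‖) ^ 2 := by
      rw [hTRdef, Finset.mul_sum]
      exact Finset.sum_congr rfl fun j _ => by ring
    rw [this, hDdef]
    exact sum_sq_le_sq_sum _ _ fun j _ => by positivity
  -- pass to square-root weighted quantities
  set sq : ℝ := Real.sqrt (τ / κ) with hsqdef
  have hsq0 : (0 : ℝ) ≤ sq := Real.sqrt_nonneg _
  have hsq2 : sq ^ 2 = τ / κ := Real.sq_sqrt (by positivity)
  set X : ℝ := sq * S with hXdef
  set A : ℝ := sq * ‖ez 0‖ with hAdef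
  set B : ℝ := sq * P with hBdef
  have hX0 : 0 ≤ X := mul_nonneg hsq0 hS0
  have hA0 : 0 ≤ A := mul_nonneg hsq0 (norm_nonneg _)
  have hB0 : 0 ≤ B := mul_nonneg hsq0 hP0
  have hquad : X ^ 2 ≤ A ^ 2 + 2 * X * B + 2 * K * D ^ 2 := by
    have hmul := mul_le_mul_of_nonneg_left master (le_of_lt (div_pos hτ hκ))
    have e1 : X ^ 2 = τ / κ * S ^ 2 := by rw [hXdef, mul_pow, hsq2]
    have e2 : A ^ 2 = τ / κ * ‖ez 0‖ ^ 2 := by rw [hAdef, mul_pow, hsq2]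
    have e3 : τ / κ * (2 * S * P) = 2 * X * B := by
      rw [hXdef, hBdef, ← hsq2]; ring
    have e4 : τ / κ * (2 * κ * (K * τ * TR)) = 2 * K * (τ ^ 2 * TR) := by
      field_simp [hκ.ne']
    have e5 : 2 * K * (τ ^ 2 * TR) ≤ 2 * K * D ^ 2 :=
      mul_le_mul_of_nonneg_left hTRD (by positivity)
    rw [mul_add, mul_add, e3, e4] at hmul
    rw [e1, e2]
    linarith
  have key : X ≤ 2 * A + 2 * B + 2 * Real.sqrt K * D :=
    quad_aux K X A B D hKpos hX0 hA0 hB0 hD0 hquad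
  -- conclude
  have hBeq : Real.sqrt τ * ∑ j ∈ Icc 1 N, (Real.sqrt κ)⁻¹ * ‖ρz j - ρz (j - 1)‖ = B := by
    rw [hBdef, hsqdef, Real.sqrt_div hτ.le, div_eq_mul_inv, hPdef, ← Finset.mul_sum, mul_assoc]
  have hlhs : Real.sqrt (τ / κ) * ‖ez m‖ ≤ X := by
    rw [hXdef, ← hsqdef]
    exact mul_le_mul_of_nonneg_left (hSmax m hmN) hsq0
  rw [hBeq]
  calc Real.sqrt (τ / κ) * ‖ez m‖ ≤ X := hlhs
    _ ≤ 2 * A + 2 * B + 2 * Real.sqrt K * D := key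
    _ ≤ (2 + 2 * Real.sqrt K) * (A + B + D) := by
        nlinarith [mul_nonneg hs0 hA0, mul_nonneg hs0 hB0, hD0]
    _ = (2 + 2 * Real.sqrt K) * (Real.sqrt (τ / κ) * ‖ez 0‖ + B + D) := by rw [hAdef, hsqdef]
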